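/- In any triangle with sides a, b, c, area S, circumradius R, and inradius r, a² + b² + c² ≥ 2√3·S + 2r(4R + r) + (a−b)² + (b−c)² + (c−a)². -/

import Mathlib

theorem refinement_one (a b c : ℝ) (ha : 0 < a) (hb : 0 < b) (hc : 0 < c)
    (hA : a < b + c) (hB : b < c + a) (hC : c < a + b) (s S : ℝ) (hs : s = (a + b + c) / 2)
    (hS : S = Real.sqrt (s * (s - a) * (s - b) * (s - c))) (R : ℝ) (hR : R = a * b * c / (4 * S)) (r : ℝ) (hr : r = S / s) :
    a ^ 2 + b ^ 2 + c ^ 2 ≥ 2 * Real.sqrt 3 * S + 2 * r * (4 * R + r)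
      + (a - b) ^ 2 + (b - c) ^ 2 + (c - a) ^ 2 := by
  have hx : 0 < s - a := by rw [hs]; linarith
  have hy : 0 < s - b := by rw [hs]; linarith
  have hz : 0 < s - c := by rw [hs]; linarith
  have hsp : 0 < s := by rw [hs]; linarith
  have hprod : 0 < s * (s - a) * (s - b) * (s - c) := by positivity
  have hSpos : 0 < S := by rw [hS]; exact Real.sqrt_pos.mpr hprod
  have hS2 : S ^ 2 = s * (s - a) * (s - b) * (s - c) := by
    rw [hS, Real.sq_sqrt hprod.le]
  set x := s - a with hxd
  set y := s - b with hyd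
  set z := s - c with hzd
  -- simplify 2r(4R+r)
  have key1 : 2 * r * (4 * R + r) = 2 * (a * b * c) / s + 2 * (x * y * z) / s := by
    rw [hr, hR]
    field_simp
    linear_combination hS2
  have hQ : 0 < x * y + y * z + z * x := by positivity
  have hsqrt : Real.sqrt 3 * S ≤ x * y + y * z + z * x := by
    rw [hS, ← Real.sqrt_mul (by norm_num : (3:ℝ) ≥ 0)]
    have h1 : 3 * (s * x * y * z) ≤ (x * y + y * z + z * x) ^ 2 := by
      have hsxyz : s = x + y + z := by rw [hxd, hyd, hzd, hs]; ring
      rw [hsxyz]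
      nlinarith [sq_nonneg (x*y - y*z), sq_nonneg (y*z - z*x), sq_nonneg (z*x - x*y)]
    calc Real.sqrt (3 * (s * x * y * z)) ≤ Real.sqrt ((x * y + y * z + z * x) ^ 2) :=
          Real.sqrt_le_sqrt h1
      _ = x * y + y * z + z * x := Real.sqrt_sq hQ.le
  -- the algebraic identity
  have key2 : a ^ 2 + b ^ 2 + c ^ 2 - ((a - b) ^ 2 + (b - c) ^ 2 + (c - a) ^ 2)
      - (2 * (a * b * c) / s + 2 * (x * y * z) / s) = 2 * (x * y + y * z + z * x) := by
    rw [hxd, hyd, hzd]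
    field_simp
    rw [hs]; ring
  rw [key1]
  nlinarith [hsqrt, key2]
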